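/- Let κ, ξ, γ be real numbers, define the entrywise nonlinearity G on complex n×m matrices by G(U)_{ij} = −(κ + iξ)|U_{ij}|² U_{ij} + γ U_{ij}, and set L = 3√(κ² + ξ²) δ² + |γ| for some δ ≥ 0. Suppose u, v : [0, τ] → ℂ^{n×m} are differentiable with u'(t) = G(u(t)) and v'(t) = G(v(t)) for all t ∈ [0, τ], and all entries of u(t) and v(t) have modulus at most δ for all t ∈ [0, τ]. Then for every t ∈ [0, τ], ‖u(t) − v(t)‖_F ≤ e^{L t} ‖u(0) − v(0)‖_F. -/

import Mathlib

open scoped BigOperators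

attribute [local instance] Matrix.frobeniusNormedAddCommGroup Matrix.frobeniusNormedSpace

/-- Frobenius norm of a complex matrix. -/
noncomputable def frobNorm {n m : ℕ} (Z : Matrix (Fin n) (Fin m) ℂ) : ℝ :=
  Real.sqrt (∑ i, ∑ j, ‖Z i j‖ ^ 2)

/-- The entrywise nonlinearity `G(U)_{ij} = -(κ + iξ)|U_{ij}|² U_{ij} + γ U_{ij}`. -/
noncomputable def Gnl (κ ξ γ : ℝ) {n m : ℕ} (U : Matrix (Fin n) (Fin m) ℂ) :
    Matrix (Fin n) (Fin m) ℂ :=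
  Matrix.of fun i j =>
    -((κ : ℂ) + (ξ : ℂ) * Complex.I) * ↑(‖U i j‖ ^ 2) * U i j + (γ : ℂ) * U i j

lemma frobNorm_eq {n m : ℕ} (Z : Matrix (Fin n) (Fin m) ℂ) : frobNorm Z = ‖Z‖ := by
  rw [Matrix.frobenius_norm_def, frobNorm, Real.sqrt_eq_rpow]
  congr 1
  · congr 1; ext i; congr 1; ext j
    rw [← Real.rpow_natCast]
    norm_num

lemma cubic_lip {δ : ℝ} (hδ : 0 ≤ δ) {a b : ℂ} (ha : ‖a‖ ≤ δ)
    (hb : ‖b‖ ≤ δ) :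
    ‖((‖a‖ ^ 2 : ℝ) : ℂ) * a - ((‖b‖ ^ 2 : ℝ) : ℂ) * b‖
      ≤ 3 * δ ^ 2 * ‖a - b‖ := by
  set A := ‖a‖ with hA
  set B := ‖b‖ with hB
  have hid : ((A ^ 2 : ℝ) : ℂ) * a - ((B ^ 2 : ℝ) : ℂ) * b
      = ((A ^ 2 : ℝ) : ℂ) * (a - b) + (((A ^ 2 : ℝ) : ℂ) - ((B ^ 2 : ℝ) : ℂ)) * b := by ring
  have hAB : |A - B| ≤ ‖a - b‖ := abs_norm_sub_norm_le a b
  have h2 : |A ^ 2 - B ^ 2| ≤ 2 * δ * ‖a - b‖ := by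
    have : A ^ 2 - B ^ 2 = (A - B) * (A + B) := by ring
    rw [this, abs_mul]
    have h3 : |A + B| ≤ 2 * δ := by
      rw [abs_of_nonneg (by positivity)]; linarith
    calc |A - B| * |A + B| ≤ ‖a - b‖ * (2 * δ) :=
          mul_le_mul hAB h3 (abs_nonneg _) (norm_nonneg _)
      _ = 2 * δ * ‖a - b‖ := by ring
  calc ‖((A ^ 2 : ℝ) : ℂ) * a - ((B ^ 2 : ℝ) : ℂ) * b‖
      ≤ ‖((A ^ 2 : ℝ) : ℂ) * (a - b)‖
        + ‖(((A ^ 2 : ℝ) : ℂ) - ((B ^ 2 : ℝ) : ℂ)) * b‖ := by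
        rw [hid]; exact norm_add_le _ _
    _ = |A ^ 2| * ‖a - b‖ + |A ^ 2 - B ^ 2| * B := by
        rw [norm_mul, norm_mul, Complex.norm_real, Real.norm_eq_abs, ← Complex.ofReal_sub, Complex.norm_real, Real.norm_eq_abs, hB]
    _ ≤ δ ^ 2 * ‖a - b‖ + (2 * δ * ‖a - b‖) * δ := by
        have h4 : |A ^ 2| ≤ δ ^ 2 := by
          rw [abs_of_nonneg (by positivity)]
          exact pow_le_pow_left₀ (norm_nonneg _) ha 2
        have h5 : |A ^ 2 - B ^ 2| * B ≤ (2 * δ * ‖a - b‖) * δ :=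
          mul_le_mul h2 hb (norm_nonneg _) (by positivity)
        have h6 : |A ^ 2| * ‖a - b‖ ≤ δ ^ 2 * ‖a - b‖ :=
          mul_le_mul_of_nonneg_right h4 (norm_nonneg _)
        linarith
    _ = 3 * δ ^ 2 * ‖a - b‖ := by ring

lemma entry_lip (κ ξ γ : ℝ) {δ : ℝ} (hδ : 0 ≤ δ) {a b : ℂ} (ha : ‖a‖ ≤ δ)
    (hb : ‖b‖ ≤ δ) :
    ‖(-((κ : ℂ) + (ξ : ℂ) * Complex.I) * ((‖a‖ ^ 2 : ℝ) : ℂ) * a + (γ : ℂ) * a)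
      - (-((κ : ℂ) + (ξ : ℂ) * Complex.I) * ((‖b‖ ^ 2 : ℝ) : ℂ) * b + (γ : ℂ) * b)‖
      ≤ (3 * Real.sqrt (κ ^ 2 + ξ ^ 2) * δ ^ 2 + |γ|) * ‖a - b‖ := by
  have hid : (-((κ : ℂ) + (ξ : ℂ) * Complex.I) * ((‖a‖ ^ 2 : ℝ) : ℂ) * a + (γ : ℂ) * a)
      - (-((κ : ℂ) + (ξ : ℂ) * Complex.I) * ((‖b‖ ^ 2 : ℝ) : ℂ) * b + (γ : ℂ) * b)
      = -((κ : ℂ) + (ξ : ℂ) * Complex.I) *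
          (((‖a‖ ^ 2 : ℝ) : ℂ) * a - ((‖b‖ ^ 2 : ℝ) : ℂ) * b)
        + (γ : ℂ) * (a - b) := by ring
  have habs : ‖(κ : ℂ) + (ξ : ℂ) * Complex.I‖ = Real.sqrt (κ ^ 2 + ξ ^ 2) :=
    Complex.norm_add_mul_I κ ξ
  rw [hid]
  calc ‖-((κ : ℂ) + (ξ : ℂ) * Complex.I) *
          (((‖a‖ ^ 2 : ℝ) : ℂ) * a - ((‖b‖ ^ 2 : ℝ) : ℂ) * b)
        + (γ : ℂ) * (a - b)‖
      ≤ ‖-((κ : ℂ) + (ξ : ℂ) * Complex.I) *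
          (((‖a‖ ^ 2 : ℝ) : ℂ) * a - ((‖b‖ ^ 2 : ℝ) : ℂ) * b)‖
        + ‖(γ : ℂ) * (a - b)‖ := norm_add_le _ _
    _ = Real.sqrt (κ ^ 2 + ξ ^ 2) *
          ‖((‖a‖ ^ 2 : ℝ) : ℂ) * a - ((‖b‖ ^ 2 : ℝ) : ℂ) * b‖
        + |γ| * ‖a - b‖ := by
        rw [norm_mul, norm_mul, norm_neg, habs, Complex.norm_real, Real.norm_eq_abs]
    _ ≤ Real.sqrt (κ ^ 2 + ξ ^ 2) * (3 * δ ^ 2 * ‖a - b‖)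
        + |γ| * ‖a - b‖ := by
        have := cubic_lip hδ ha hb
        have hs : (0:ℝ) ≤ Real.sqrt (κ ^ 2 + ξ ^ 2) := Real.sqrt_nonneg _
        nlinarith [norm_nonneg (a - b)]
    _ = (3 * Real.sqrt (κ ^ 2 + ξ ^ 2) * δ ^ 2 + |γ|) * ‖a - b‖ := by ring

lemma frob_lip (κ ξ γ : ℝ) {δ : ℝ} (hδ : 0 ≤ δ) {n m : ℕ}
    {U V : Matrix (Fin n) (Fin m) ℂ}
    (hU : ∀ i j, ‖U i j‖ ≤ δ) (hV : ∀ i j, ‖V i j‖ ≤ δ) :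
    ‖Gnl κ ξ γ U - Gnl κ ξ γ V‖
      ≤ (3 * Real.sqrt (κ ^ 2 + ξ ^ 2) * δ ^ 2 + |γ|) * ‖U - V‖ := by
  set L := 3 * Real.sqrt (κ ^ 2 + ξ ^ 2) * δ ^ 2 + |γ| with hLdef
  have hL0 : 0 ≤ L := by positivity
  rw [← frobNorm_eq, ← frobNorm_eq, frobNorm, frobNorm]
  have hsum : (∑ i, ∑ j, ‖(Gnl κ ξ γ U - Gnl κ ξ γ V) i j‖ ^ 2)
      ≤ L ^ 2 * ∑ i, ∑ j, ‖(U - V) i j‖ ^ 2 := by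
    rw [Finset.mul_sum]
    refine Finset.sum_le_sum fun i _ => ?_
    rw [Finset.mul_sum]
    refine Finset.sum_le_sum fun j _ => ?_
    have h := entry_lip κ ξ γ hδ (hU i j) (hV i j)
    have h2 : ‖(Gnl κ ξ γ U - Gnl κ ξ γ V) i j‖ ≤ L * ‖(U - V) i j‖ := by
      simpa [Gnl, Matrix.sub_apply] using h
    calc ‖(Gnl κ ξ γ U - Gnl κ ξ γ V) i j‖ ^ 2
        ≤ (L * ‖(U - V) i j‖) ^ 2 :=
          pow_le_pow_left₀ (norm_nonneg _) h2 2
      _ = L ^ 2 * ‖(U - V) i j‖ ^ 2 := by ring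
  calc Real.sqrt (∑ i, ∑ j, ‖(Gnl κ ξ γ U - Gnl κ ξ γ V) i j‖ ^ 2)
      ≤ Real.sqrt (L ^ 2 * ∑ i, ∑ j, ‖(U - V) i j‖ ^ 2) := Real.sqrt_le_sqrt hsum
    _ = L * Real.sqrt (∑ i, ∑ j, ‖(U - V) i j‖ ^ 2) := by
        rw [Real.sqrt_mul (by positivity), Real.sqrt_sq hL0]

theorem stmt_9 {n m : ℕ} (κ ξ γ δ τ : ℝ) (hδ : 0 ≤ δ) (hτ : 0 ≤ τ)
    (L : ℝ) (hL : L = 3 * Real.sqrt (κ ^ 2 + ξ ^ 2) * δ ^ 2 + |γ|)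
    (u v : ℝ → Matrix (Fin n) (Fin m) ℂ)
    (hu : ∀ t ∈ Set.Icc (0 : ℝ) τ, HasDerivAt u (Gnl κ ξ γ (u t)) t)
    (hv : ∀ t ∈ Set.Icc (0 : ℝ) τ, HasDerivAt v (Gnl κ ξ γ (v t)) t)
    (hub : ∀ t ∈ Set.Icc (0 : ℝ) τ, ∀ i j, ‖u t i j‖ ≤ δ)
    (hvb : ∀ t ∈ Set.Icc (0 : ℝ) τ, ∀ i j, ‖v t i j‖ ≤ δ) :
    ∀ t ∈ Set.Icc (0 : ℝ) τ,
      frobNorm (u t - v t) ≤ Real.exp (L * t) * frobNorm (u 0 - v 0) := by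
  set f : ℝ → Matrix (Fin n) (Fin m) ℂ := fun t => u t - v t with hf
  set f' : ℝ → Matrix (Fin n) (Fin m) ℂ :=
    fun t => Gnl κ ξ γ (u t) - Gnl κ ξ γ (v t) with hf'
  have hder : ∀ t ∈ Set.Icc (0 : ℝ) τ, HasDerivAt f (f' t) t :=
    fun t ht => (hu t ht).sub (hv t ht)
  have hcont : ContinuousOn f (Set.Icc 0 τ) :=
    fun t ht => (hder t ht).continuousAt.continuousWithinAt
  have hder' : ∀ t ∈ Set.Ico (0 : ℝ) τ, HasDerivWithinAt f (f' t) (Set.Ici t) t :=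
    fun t ht => (hder t ⟨ht.1, le_of_lt ht.2⟩).hasDerivWithinAt
  have hbound : ∀ t ∈ Set.Ico (0 : ℝ) τ, ‖f' t‖ ≤ L * ‖f t‖ + 0 := by
    intro t ht
    have ht' : t ∈ Set.Icc (0 : ℝ) τ := ⟨ht.1, le_of_lt ht.2⟩
    rw [add_zero, hL]
    exact frob_lip κ ξ γ hδ (hub t ht') (hvb t ht')
  have := norm_le_gronwallBound_of_norm_deriv_right_le hcont hder' (le_refl ‖f 0‖) hbound
  intro t ht
  have h := this t ht
  rw [gronwallBound_ε0, sub_zero] at h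
  rw [frobNorm_eq, frobNorm_eq]
  calc ‖u t - v t‖ = ‖f t‖ := rfl
    _ ≤ ‖f 0‖ * Real.exp (L * t) := h
    _ = Real.exp (L * t) * ‖u 0 - v 0‖ := by rw [mul_comm]
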